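/- Fix an integer K ≥ 1 and γ, ε ∈ (0,1), and let F and D be as defined. Suppose x̲ ∈ D is a fixed point of F such that every fixed point y ∈ D of F satisfies x̲_k ≤ y_k for all k < K. Then for every x⁰ ∈ D with x⁰_k ≤ x̲_k for all k < K, the iterates x^{t+1} = F(x^t) converge to x̲ as t → ∞. (That is, if the initial record distribution is dominated by the least cooperative steady state, the record distribution converges to the least cooperative steady state.) -/

import Mathlib

/-- The set of monotone cumulative record distributions (only indices `< K` matter). -/
def grimD (K : ℕ) : Set (ℕ → ℝ) :=
  {x | 0 ≤ x 0 ∧ (∀ k, k + 1 < K → x k ≤ x (k + 1)) ∧ x (K - 1) ≤ 1}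

/-- The GrimK one-period update map on cumulative record distributions. -/
def grimF (K : ℕ) (γ ε : ℝ) (x : ℕ → ℝ) : ℕ → ℝ := fun k =>
  if k = 0 then 1 - γ + γ * (1 - ε) * x (K - 1) * x 0
  else 1 - γ + γ * x (k - 1) + γ * (1 - ε) * x (K - 1) * (x k - x (k - 1))

lemma grimD_chain {K : ℕ} {x : ℕ → ℝ} (hx : x ∈ grimD K) :
    ∀ i j, i ≤ j → j < K → x i ≤ x j := by
  intro i j hij hj
  induction j, hij using Nat.le_induction with
  | base => exact le_rfl
  | succ j hij ih => exact le_trans (ih (by omega)) (hx.2.1 j hj)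

lemma grimD_nonneg {K : ℕ} {x : ℕ → ℝ} (hx : x ∈ grimD K) :
    ∀ k < K, 0 ≤ x k := fun k hk =>
  le_trans hx.1 (grimD_chain hx 0 k (Nat.zero_le _) hk)

lemma grimD_le_one {K : ℕ} {x : ℕ → ℝ} (hx : x ∈ grimD K) :
    ∀ k < K, x k ≤ 1 := fun k hk =>
  le_trans (grimD_chain hx k (K - 1) (by omega) (by omega)) hx.2.2

lemma grimF_mem {K : ℕ} (hK : 1 ≤ K) {γ ε : ℝ}
    (hγ : γ ∈ Set.Ioo (0:ℝ) 1) (hε : ε ∈ Set.Ioo (0:ℝ) 1)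
    {x : ℕ → ℝ} (hx : x ∈ grimD K) : grimF K γ ε x ∈ grimD K := by
  obtain ⟨hγ0, hγ1⟩ := hγ
  obtain ⟨hε0, hε1⟩ := hε
  have hKK : K - 1 < K := by omega
  have ha0 : 0 ≤ x (K - 1) := grimD_nonneg hx _ hKK
  have ha1 : x (K - 1) ≤ 1 := hx.2.2
  have h00 : 0 ≤ x 0 := hx.1
  refine ⟨?_, ?_, ?_⟩
  · show 0 ≤ grimF K γ ε x 0
    simp only [grimF, if_pos rfl, if_true]
    nlinarith [mul_nonneg (mul_nonneg (mul_nonneg hγ0.le (by linarith : (0:ℝ) ≤ 1 - ε)) ha0) h00]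
  · intro k hk1
    show grimF K γ ε x k ≤ grimF K γ ε x (k + 1)
    rcases Nat.eq_zero_or_pos k with rfl | hkpos
    · simp only [grimF, if_pos rfl, if_true, if_neg (Nat.one_ne_zero), Nat.add_sub_cancel]
      have h01 : x 0 ≤ x 1 := hx.2.1 0 hk1
      nlinarith [mul_nonneg (mul_nonneg (mul_nonneg hγ0.le (by linarith : (0:ℝ) ≤ 1 - ε)) ha0)
        (by linarith : (0:ℝ) ≤ x 1 - x 0),
        mul_nonneg (mul_nonneg hγ0.le h00) (by nlinarith : (0:ℝ) ≤ 1 - (1 - ε) * x (K - 1))]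
    · have hkne : k ≠ 0 := by omega
      simp only [grimF, if_neg hkne, if_neg (by omega : k + 1 ≠ 0), Nat.add_sub_cancel]
      have hmono : x (k - 1) ≤ x k := grimD_chain hx (k - 1) k (by omega) (by omega)
      have hmono2 : x k ≤ x (k + 1) := hx.2.1 k hk1
      nlinarith [mul_nonneg (mul_nonneg (mul_nonneg hγ0.le (by linarith : (0:ℝ) ≤ 1 - ε)) ha0)
        (by linarith : (0:ℝ) ≤ x (k + 1) - x k),
        mul_nonneg (mul_nonneg hγ0.le (by linarith : (0:ℝ) ≤ x k - x (k - 1)))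
        (by nlinarith : (0:ℝ) ≤ 1 - (1 - ε) * x (K - 1))]
  · show grimF K γ ε x (K - 1) ≤ 1
    rcases Nat.eq_or_lt_of_le hK with hK1 | hK2
    · have : K - 1 = 0 := by omega
      rw [this]
      simp only [grimF, if_pos rfl, if_true, this]
      have h01 : x 0 ≤ 1 := this ▸ ha1
      have hinner : (0:ℝ) ≤ 1 - (1 - ε) * (x 0 * x 0) := by
        nlinarith [mul_nonneg h00 h00, mul_nonneg hε0.le (mul_nonneg h00 h00),
          mul_nonneg (sub_nonneg.2 h01) h00]
      nlinarith [mul_nonneg hγ0.le hinner]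
    · have hne : K - 1 ≠ 0 := by omega
      simp only [grimF, if_neg hne]
      have hmono : x (K - 1 - 1) ≤ x (K - 1) := grimD_chain hx (K - 1 - 1) (K - 1) (by omega) hKK
      have hm0 : 0 ≤ x (K - 1 - 1) := grimD_nonneg hx _ (by omega)
      nlinarith [mul_nonneg (by linarith : (0:ℝ) ≤ x (K - 1) - x (K - 1 - 1))
        (by nlinarith : (0:ℝ) ≤ 1 - (1 - ε) * x (K - 1))]

lemma grimF_mono {K : ℕ} (hK : 1 ≤ K) {γ ε : ℝ}
    (hγ : γ ∈ Set.Ioo (0:ℝ) 1) (hε : ε ∈ Set.Ioo (0:ℝ) 1)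
    {x y : ℕ → ℝ} (hx : x ∈ grimD K) (hy : y ∈ grimD K)
    (hle : ∀ k < K, x k ≤ y k) :
    ∀ k < K, grimF K γ ε x k ≤ grimF K γ ε y k := by
  obtain ⟨hγ0, hγ1⟩ := hγ
  obtain ⟨hε0, hε1⟩ := hε
  have hKK : K - 1 < K := by omega
  have hxa0 : 0 ≤ x (K - 1) := grimD_nonneg hx _ hKK
  have hxa1 : x (K - 1) ≤ 1 := hx.2.2
  have hKle : x (K - 1) ≤ y (K - 1) := hle _ hKK
  have hy00 : 0 ≤ y 0 := hy.1
  intro k hk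
  rcases Nat.eq_zero_or_pos k with rfl | hkpos
  · simp only [grimF, if_pos rfl, if_true]
    have h0 : x 0 ≤ y 0 := hle 0 hk
    nlinarith [mul_nonneg (mul_nonneg hγ0.le (by linarith : (0:ℝ) ≤ 1 - ε))
        (mul_nonneg (by linarith : (0:ℝ) ≤ y (K - 1) - x (K - 1)) hy00),
      mul_nonneg (mul_nonneg hγ0.le (by linarith : (0:ℝ) ≤ 1 - ε))
        (mul_nonneg hxa0 (by linarith : (0:ℝ) ≤ y 0 - x 0))]
  · have hkne : k ≠ 0 := by omega
    simp only [grimF, if_neg hkne]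
    have hx1 : x (k - 1) ≤ y (k - 1) := hle (k - 1) (by omega)
    have hx2 : x k ≤ y k := hle k hk
    have hym : y (k - 1) ≤ y k := grimD_chain hy (k - 1) k (by omega) hk
    nlinarith [mul_nonneg (mul_nonneg hγ0.le
        (by nlinarith : (0:ℝ) ≤ 1 - (1 - ε) * x (K - 1)))
        (by linarith : (0:ℝ) ≤ y (k - 1) - x (k - 1)),
      mul_nonneg (mul_nonneg hγ0.le (by linarith : (0:ℝ) ≤ 1 - ε))
        (mul_nonneg (by linarith : (0:ℝ) ≤ y (K - 1) - x (K - 1))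
          (by linarith : (0:ℝ) ≤ y k - y (k - 1))),
      mul_nonneg (mul_nonneg hγ0.le (by linarith : (0:ℝ) ≤ 1 - ε))
        (mul_nonneg hxa0 (by linarith : (0:ℝ) ≤ y k - x k))]

theorem stmt_17 (K : ℕ) (hK : 1 ≤ K) (γ ε : ℝ)
    (hγ : γ ∈ Set.Ioo (0:ℝ) 1) (hε : ε ∈ Set.Ioo (0:ℝ) 1)
    (xlow : ℕ → ℝ) (hxlow : xlow ∈ grimD K)
    (hfix : ∀ k < K, grimF K γ ε xlow k = xlow k)
    (hmin : ∀ y ∈ grimD K, (∀ k < K, grimF K γ ε y k = y k) → ∀ k < K, xlow k ≤ y k)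
    (x0 : ℕ → ℝ) (hx0 : x0 ∈ grimD K) (hdom : ∀ k < K, x0 k ≤ xlow k)
    (seq : ℕ → ℕ → ℝ) (hseq0 : seq 0 = x0)
    (hseq : ∀ t, seq (t + 1) = grimF K γ ε (seq t)) :
    ∀ k < K, Filter.Tendsto (fun t => seq t k) Filter.atTop (nhds (xlow k)) := by
  have hKK : K - 1 < K := by omega
  -- the lower iteration, starting from 0
  set b : ℕ → ℕ → ℝ := fun t => (grimF K γ ε)^[t] (fun _ => (0:ℝ)) with hb
  have hbsucc : ∀ t, b (t + 1) = grimF K γ ε (b t) := fun t =>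
    Function.iterate_succ_apply' _ _ _
  have hb0D : (fun _ => (0:ℝ)) ∈ grimD K := ⟨le_rfl, fun _ _ => le_rfl, zero_le_one⟩
  have hbD : ∀ t, b t ∈ grimD K := by
    intro t
    induction t with
    | zero => exact hb0D
    | succ t ih => rw [hbsucc]; exact grimF_mem hK hγ hε ih
  have hble : ∀ t, ∀ k < K, b t k ≤ xlow k := by
    intro t
    induction t with
    | zero => exact fun k hk => grimD_nonneg hxlow k hk
    | succ t ih =>
      intro k hk
      rw [hbsucc]
      calc grimF K γ ε (b t) k ≤ grimF K γ ε xlow k :=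
            grimF_mono hK hγ hε (hbD t) hxlow ih k hk
        _ = xlow k := hfix k hk
  have hbmono : ∀ t, ∀ k < K, b t k ≤ b (t + 1) k := by
    intro t
    induction t with
    | zero =>
      intro k hk
      have : b 1 k = grimF K γ ε (fun _ => (0:ℝ)) k := by rw [hbsucc 0]; rfl
      rw [this]
      show (0:ℝ) ≤ _
      simp only [grimF]
      split <;> nlinarith [hγ.2, hγ.1, hε.1, hε.2]
    | succ t ih =>
      intro k hk
      rw [hbsucc, hbsucc]
      exact grimF_mono hK hγ hε (hbD t) (hbD (t + 1)) ih k hk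
  -- properties of seq
  have hseqD : ∀ t, seq t ∈ grimD K := by
    intro t
    induction t with
    | zero => rw [hseq0]; exact hx0
    | succ t ih => rw [hseq]; exact grimF_mem hK hγ hε ih
  have hseqle : ∀ t, ∀ k < K, seq t k ≤ xlow k := by
    intro t
    induction t with
    | zero => rw [hseq0]; exact hdom
    | succ t ih =>
      intro k hk
      rw [hseq]
      calc grimF K γ ε (seq t) k ≤ grimF K γ ε xlow k :=
            grimF_mono hK hγ hε (hseqD t) hxlow ih k hk
        _ = xlow k := hfix k hk
  have hbseq : ∀ t, ∀ k < K, b t k ≤ seq t k := by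
    intro t
    induction t with
    | zero => rw [hseq0]; exact fun k hk => grimD_nonneg hx0 k hk
    | succ t ih =>
      intro k hk
      rw [hseq, hbsucc]
      exact grimF_mono hK hγ hε (hbD t) (hseqD t) ih k hk
  -- limit of the lower iteration
  set z : ℕ → ℝ := fun k => ⨆ t, b t k with hz
  have hbdd : ∀ k < K, BddAbove (Set.range fun t => b t k) := by
    intro k hk
    exact ⟨xlow k, by rintro _ ⟨t, rfl⟩; exact hble t k hk⟩
  have htend : ∀ k < K, Filter.Tendsto (fun t => b t k) Filter.atTop (nhds (z k)) := by
    intro k hk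
    exact tendsto_atTop_ciSup (monotone_nat_of_le_succ fun t => hbmono t k hk) (hbdd k hk)
  have hzle : ∀ k < K, z k ≤ xlow k := fun k hk => ciSup_le fun t => hble t k hk
  have hzD : z ∈ grimD K := by
    refine ⟨?_, ?_, ?_⟩
    · have : b 0 0 ≤ z 0 := le_ciSup (hbdd 0 (by omega)) 0
      exact this
    · intro k hk1
      exact ciSup_mono (hbdd (k + 1) hk1) fun t => (hbD t).2.1 k hk1
    · exact ciSup_le fun t => grimD_le_one (hbD t) (K - 1) hKK
  have hzfix : ∀ k < K, grimF K γ ε z k = z k := by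
    intro k hk
    have h1 : Filter.Tendsto (fun t => b (t + 1) k) Filter.atTop (nhds (z k)) :=
      (htend k hk).comp (Filter.tendsto_add_atTop_nat 1)
    have h2 : Filter.Tendsto (fun t => grimF K γ ε (b t) k) Filter.atTop
        (nhds (grimF K γ ε z k)) := by
      rcases Nat.eq_zero_or_pos k with rfl | hkpos
      · simp only [grimF, if_pos rfl, if_true]
        exact Filter.Tendsto.const_add _
          ((Filter.Tendsto.const_mul _ (htend (K - 1) hKK)).mul (htend 0 hk))
      · have hkne : k ≠ 0 := by omega
        simp only [grimF, if_neg hkne]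
        exact (Filter.Tendsto.const_add _
          (Filter.Tendsto.const_mul _ (htend (k - 1) (by omega)))).add
          ((Filter.Tendsto.const_mul _ (htend (K - 1) hKK)).mul
            ((htend k hk).sub (htend (k - 1) (by omega))))
    have heq : (fun t => b (t + 1) k) = fun t => grimF K γ ε (b t) k :=
      funext fun t => by rw [hbsucc t]
    rw [heq] at h1
    exact tendsto_nhds_unique h2 h1
  have hzeq : ∀ k < K, z k = xlow k := fun k hk =>
    le_antisymm (hzle k hk) (hmin z hzD hzfix k hk)
  -- squeeze
  intro k hk
  have hlow : Filter.Tendsto (fun t => b t k) Filter.atTop (nhds (xlow k)) := by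
    rw [← hzeq k hk]; exact htend k hk
  exact tendsto_of_tendsto_of_tendsto_of_le_of_le hlow tendsto_const_nhds
    (fun t => hbseq t k hk) (fun t => hseqle t k hk)
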